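/- Let T be a strongly connected digraph on t ≥ 2 vertices and let K̄_2 denote the digraph with two vertices and no arcs. Then the composition Q = T[K̄_2, ..., K̄_2] (each H_i = K̄_2) has a good pair rooted at every vertex of Q. -/
import Mathlib


variable {V : Type*}

/-- A digraph (given by its arc relation) is strongly connected. -/
def Strong (A : V → V → Prop) : Prop :=
  ∀ x y : V, Relation.ReflTransGen A x y

/-- `B` is an out-branching of the digraph `A` rooted at `r`:
a spanning subdigraph in which every vertex is reachable from `r`,
every vertex other than `r` has in-degree exactly one, and `r` has in-degree zero. -/
def IsOutBranching (A B : V → V → Prop) (r : V) : Prop :=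
  (∀ x y, B x y → A x y) ∧
  (∀ v, Relation.ReflTransGen B r v) ∧
  (∀ v, v ≠ r → Nat.card {u : V // B u v} = 1) ∧
  (∀ u, ¬ B u r)

/-- `B` is an in-branching of the digraph `A` rooted at `r`. -/
def IsInBranching (A B : V → V → Prop) (r : V) : Prop :=
  (∀ x y, B x y → A x y) ∧
  (∀ v, Relation.ReflTransGen B v r) ∧
  (∀ v, v ≠ r → Nat.card {u : V // B v u} = 1) ∧
  (∀ u, ¬ B r u)

/-- A good pair rooted at `r`: arc-disjoint out- and in-branchings rooted at `r`. -/
def GoodPair (A : V → V → Prop) (r : V) : Prop :=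
  ∃ Bp Bm : V → V → Prop, IsOutBranching A Bp r ∧ IsInBranching A Bm r ∧
    ∀ x y, ¬ (Bp x y ∧ Bm x y)

/-- Arc relation of the composition `T[H_1, …, H_t]`. -/
def CompArc {t : ℕ} (T : Fin t → Fin t → Prop) (n : Fin t → ℕ)
    (H : ∀ i : Fin t, Fin (n i) → Fin (n i) → Prop)
    (x y : (i : Fin t) × Fin (n i)) : Prop :=
  (∃ h : x.1 = y.1, H y.1 (h ▸ x.2) y.2) ∨ (x.1 ≠ y.1 ∧ T x.1 y.1)

/-- A semicomplete digraph: some arc between every pair of distinct vertices. -/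
def Semicomplete {α : Type*} (T : α → α → Prop) : Prop :=
  ∀ x y : α, x ≠ y → T x y ∨ T y x

-- auxiliary infrastructure

def chainN {t : ℕ} (A : Fin t → Fin t → Prop) : ℕ → Fin t → Fin t → Prop
  | 0, x, y => x = y
  | n+1, x, y => ∃ z, chainN A n x z ∧ A z y

lemma rtg_chain {t : ℕ} {A : Fin t → Fin t → Prop} {x y : Fin t}
    (h : Relation.ReflTransGen A x y) : ∃ n, chainN A n x y := by
  induction h with
  | refl => exact ⟨0, rfl⟩
  | tail _ hbc ih => obtain ⟨n, hn⟩ := ih; exact ⟨n+1, _, hn, hbc⟩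

lemma exists_parent {t : ℕ} {A : Fin t → Fin t → Prop} {i₀ : Fin t}
    (h : ∀ j, Relation.ReflTransGen A i₀ j) :
    ∃ (p : Fin t → Fin t) (d : Fin t → ℕ),
      ∀ j, j ≠ i₀ → A (p j) j ∧ d (p j) < d j := by
  classical
  have hex : ∀ j, ∃ n, chainN A n i₀ j := fun j => rtg_chain (h j)
  have key : ∀ j, ∃ z, j ≠ i₀ → (A z j ∧ Nat.find (hex z) < Nat.find (hex j)) := by
    intro j
    by_cases hj : j = i₀
    · exact ⟨i₀, fun h' => absurd hj h'⟩
    · have h0 : Nat.find (hex j) ≠ 0 := by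
        intro h0
        have hs := Nat.find_spec (hex j)
        rw [h0] at hs
        simp only [chainN] at hs
        exact hj hs.symm
      obtain ⟨m, hm⟩ := Nat.exists_eq_succ_of_ne_zero h0
      have hspec := Nat.find_spec (hex j)
      rw [hm] at hspec
      simp only [chainN] at hspec
      obtain ⟨z, hz1, hz2⟩ := hspec
      refine ⟨z, fun _ => ⟨hz2, ?_⟩⟩
      have : Nat.find (hex z) ≤ m := Nat.find_min' (hex z) hz1
      omega
  choose p hp using key
  exact ⟨p, fun j => Nat.find (hex j), hp⟩

lemma exists_arc_from_root {t : ℕ} {A : Fin t → Fin t → Prop} {i₀ : Fin t}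
    (ht : 2 ≤ t) (p : Fin t → Fin t) (d : Fin t → ℕ)
    (hp : ∀ j, j ≠ i₀ → A (p j) j ∧ d (p j) < d j) :
    ∃ x, x ≠ i₀ ∧ A i₀ x := by
  have : Nontrivial (Fin t) := Fin.nontrivial_iff_two_le.mpr ht
  obtain ⟨y, hy⟩ := exists_ne i₀
  have H : ∀ n, ∀ y : Fin t, d y = n → y ≠ i₀ → ∃ x, x ≠ i₀ ∧ A i₀ x := by
    intro n
    induction n using Nat.strong_induction_on with
    | _ n ih =>
      intro y hdy hy
      by_cases hpy : p y = i₀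
      · exact ⟨y, hy, hpy ▸ (hp y hy).1⟩
      · exact ih (d (p y)) (hdy ▸ (hp y hy).2) (p y) rfl hpy
  exact H (d y) y rfl hy

lemma fin2_ne : ∀ c : Fin 2, ¬ (c = 1 - c) := by decide

section construction

variable {t : ℕ}

abbrev VV (t : ℕ) := (i : Fin t) × Fin 2

def tailP (q : Fin t) (p : Fin t → Fin t) (r : VV t) (y : VV t) : VV t :=
  if y.1 = r.1 then ⟨q, 0⟩ else if p y.1 = r.1 then r else ⟨p y.1, y.2⟩

def headM (w : Fin t) (p' : Fin t → Fin t) (r : VV t) (x : VV t) : VV t :=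
  if x.1 = r.1 then ⟨w, 0⟩ else if p' x.1 = r.1 then r else ⟨p' x.1, 1 - x.2⟩

def BpRel (q : Fin t) (p : Fin t → Fin t) (r : VV t) (x y : VV t) : Prop :=
  y ≠ r ∧ x = tailP q p r y

def BmRel (w : Fin t) (p' : Fin t → Fin t) (r : VV t) (x y : VV t) : Prop :=
  x ≠ r ∧ y = headM w p' r x

lemma ne_r_of_fst_ne {r : VV t} {j : Fin t} {c : Fin 2} (h : j ≠ r.1) :
    (⟨j, c⟩ : VV t) ≠ r := fun e => h (congrArg Sigma.fst e)

lemma bp_out (T : Fin t → Fin t → Prop) (p : Fin t → Fin t) (d : Fin t → ℕ)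
    (q : Fin t) (r : VV t)
    (hp : ∀ j, j ≠ r.1 → T (p j) j ∧ d (p j) < d j)
    (hq : q ≠ r.1) (hTq : T q r.1) :
    IsOutBranching (CompArc T (fun _ => 2) (fun _ _ _ => False)) (BpRel q p r) r := by
  refine ⟨?_, ?_, ?_, ?_⟩
  · rintro x y ⟨hyr, rfl⟩
    unfold tailP
    split_ifs with h1 h2
    · exact Or.inr ⟨by rw [h1]; exact hq, by rw [h1]; exact hTq⟩
    · exact Or.inr ⟨fun e => h1 e.symm, h2 ▸ (hp y.1 h1).1⟩
    · refine Or.inr ⟨?_, (hp y.1 h1).1⟩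
      intro e
      have := (hp y.1 h1).2
      rw [show p y.1 = y.1 from e] at this
      exact lt_irrefl _ this
  · have H1 : ∀ n, ∀ j : Fin t, d j = n → j ≠ r.1 → ∀ c : Fin 2,
        Relation.ReflTransGen (BpRel q p r) r ⟨j, c⟩ := by
      intro n
      induction n using Nat.strong_induction_on with
      | _ n ih =>
        intro j hdj hj c
        by_cases hpj : p j = r.1
        · refine Relation.ReflTransGen.single ⟨ne_r_of_fst_ne hj, ?_⟩
          unfold tailP
          rw [if_neg hj, if_pos hpj]
        · refine Relation.ReflTransGen.tail (ih (d (p j)) (hdj ▸ (hp j hj).2) (p j) rfl hpj c) ?_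
          refine ⟨ne_r_of_fst_ne hj, ?_⟩
          unfold tailP
          rw [if_neg hj, if_neg hpj]
    intro v
    obtain ⟨j, c⟩ := v
    by_cases hj : j = r.1
    · by_cases hv : (⟨j, c⟩ : VV t) = r
      · rw [hv]
      · refine Relation.ReflTransGen.tail (H1 (d q) q rfl hq 0) ⟨hv, ?_⟩
        unfold tailP
        rw [if_pos hj]
    · exact H1 (d j) j rfl hj c
  · intro v hv
    rw [Nat.card_eq_one_iff_unique]
    exact ⟨⟨fun a b => Subtype.ext (a.2.2.trans b.2.2.symm)⟩, ⟨⟨tailP q p r v, hv, rfl⟩⟩⟩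
  · rintro u ⟨h, -⟩; exact h rfl

lemma bm_in (T : Fin t → Fin t → Prop) (p' : Fin t → Fin t) (d' : Fin t → ℕ)
    (w : Fin t) (r : VV t)
    (hp' : ∀ j, j ≠ r.1 → T j (p' j) ∧ d' (p' j) < d' j)
    (hw : w ≠ r.1) (hTw : T r.1 w) :
    IsInBranching (CompArc T (fun _ => 2) (fun _ _ _ => False)) (BmRel w p' r) r := by
  refine ⟨?_, ?_, ?_, ?_⟩
  · rintro x y ⟨hxr, rfl⟩
    unfold headM
    split_ifs with h1 h2
    · exact Or.inr ⟨by rw [h1]; exact hw.symm, by rw [h1]; exact hTw⟩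
    · exact Or.inr ⟨h1, h2 ▸ (hp' x.1 h1).1⟩
    · refine Or.inr ⟨?_, (hp' x.1 h1).1⟩
      intro e
      have := (hp' x.1 h1).2
      rw [show p' x.1 = x.1 from e.symm] at this
      exact lt_irrefl _ this
  · have H1 : ∀ n, ∀ j : Fin t, d' j = n → j ≠ r.1 → ∀ c : Fin 2,
        Relation.ReflTransGen (BmRel w p' r) ⟨j, c⟩ r := by
      intro n
      induction n using Nat.strong_induction_on with
      | _ n ih =>
        intro j hdj hj c
        by_cases hpj : p' j = r.1
        · refine Relation.ReflTransGen.single ⟨ne_r_of_fst_ne hj, ?_⟩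
          unfold headM
          rw [if_neg hj, if_pos hpj]
        · refine Relation.ReflTransGen.head ⟨ne_r_of_fst_ne hj, ?_⟩
            (ih (d' (p' j)) (hdj ▸ (hp' j hj).2) (p' j) rfl hpj (1 - c))
          unfold headM
          rw [if_neg hj, if_neg hpj]
    intro v
    obtain ⟨j, c⟩ := v
    by_cases hj : j = r.1
    · by_cases hv : (⟨j, c⟩ : VV t) = r
      · rw [hv]
      · refine Relation.ReflTransGen.head ⟨hv, ?_⟩ (H1 (d' w) w rfl hw 0)
        unfold headM
        rw [if_pos hj]
    · exact H1 (d' j) j rfl hj c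
  · intro v hv
    rw [Nat.card_eq_one_iff_unique]
    exact ⟨⟨fun a b => Subtype.ext (a.2.2.trans b.2.2.symm)⟩, ⟨⟨headM w p' r v, hv, rfl⟩⟩⟩
  · rintro u ⟨h, -⟩; exact h rfl

lemma disj (p p' : Fin t → Fin t) (q w : Fin t) (r : VV t)
    (hq : q ≠ r.1) :
    ∀ x y : VV t, ¬ (BpRel q p r x y ∧ BmRel w p' r x y) := by
  rintro ⟨i, b⟩ ⟨j, c⟩ ⟨⟨hyr, hx⟩, hxr, hy⟩
  unfold tailP at hx
  unfold headM at hy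
  simp only at hx hy
  by_cases h1 : j = r.1
  · rw [if_pos h1] at hx
    obtain ⟨hi, -⟩ := Sigma.mk.inj_iff.mp hx
    rw [hi] at hy
    rw [if_neg hq] at hy
    by_cases h2 : p' q = r.1
    · rw [if_pos h2] at hy; exact hyr hy
    · rw [if_neg h2] at hy
      obtain ⟨hj, -⟩ := Sigma.mk.inj_iff.mp hy
      exact h2 (hj ▸ h1)
  · rw [if_neg h1] at hx
    by_cases h2 : p j = r.1
    · rw [if_pos h2] at hx; exact hxr hx
    · rw [if_neg h2] at hx
      obtain ⟨hi, hb⟩ := Sigma.mk.inj_iff.mp hx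
      subst hi
      have hb' : b = c := eq_of_heq hb
      subst hb'
      rw [if_neg h2] at hy
      by_cases h3 : p' (p j) = r.1
      · rw [if_pos h3] at hy; exact hyr hy
      · rw [if_neg h3] at hy
        obtain ⟨-, hc⟩ := Sigma.mk.inj_iff.mp hy
        exact fin2_ne b (eq_of_heq hc)

end construction

/-- If `T` is strong on `t ≥ 2` vertices, then the composition
`T[K̄₂,…,K̄₂]` (each factor the arcless two-vertex digraph) has a good pair
rooted at every vertex. -/
theorem stmt5 {t : ℕ} (ht : 2 ≤ t) (T : Fin t → Fin t → Prop)
    (hT : Strong T)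
    (r : (i : Fin t) × Fin ((fun _ : Fin t => 2) i)) :
    GoodPair (CompArc T (fun _ => 2) (fun _ _ _ => False)) r := by
  classical
  obtain ⟨p, d, hp⟩ := exists_parent (A := T) (i₀ := r.1) (fun j => hT r.1 j)
  obtain ⟨p', d', hp'⟩ := exists_parent (A := Function.swap T) (i₀ := r.1)
    (fun j => Relation.reflTransGen_swap.mpr (hT j r.1))
  obtain ⟨w, hw, hTw⟩ := exists_arc_from_root ht p d hp
  obtain ⟨q, hq, hTq⟩ := exists_arc_from_root ht p' d' hp'
  exact ⟨BpRel q p r, BmRel w p' r,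
    bp_out T p d q r hp hq hTq,
    bm_in T p' d' w r hp' hw hTw,
    disj p p' q w r hq⟩
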